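/- The Cartesian-tree matching relation is a substring-consistent equivalence relation: if two strings X and Y of equal length have equal Cartesian trees, then for any indices 1 ≤ i ≤ j ≤ |X|, the substrings X[i..j] and Y[i..j] also have equal Cartesian trees. -/

import Mathlib

open List

inductive Shape where
  | nil : Shape
  | node : Shape → Shape → Shape
deriving DecidableEq

inductive BTree (α : Type*) where
  | nil : BTree α
  | node : BTree α → α → BTree α → BTree α

def BTree.shape {α : Type*} : BTree α → Shape
  | .nil => .nil
  | .node l _ r => .node l.shape r.shape

def BTree.rootVal {α : Type*} : BTree α → Option α
  | .nil => none
  | .node _ v _ => some v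

section
variable {α : Type*} [LinearOrder α] [Inhabited α]

/-- Parent-distance value at 1-based position `i` of `S`. -/
def pdVal (S : List α) (i : ℕ) : ℕ :=
  let J := (Finset.Ico 1 i).filter (fun j => S.getD (j-1) default ≤ S.getD (i-1) default)
  if h : J.Nonempty then i - J.max' h else 0

/-- Parent-distance encoding of `S` (1-based positions). -/
def PD (S : List α) : List ℕ := (List.range S.length).map (fun k => pdVal S (k+1))

/-- 0-based index of the leftmost minimum of `S`. -/
def leftmostMinIdx (S : List α) : ℕ :=
  ((List.range S.length).argmin (fun j => S.getD j default)).getD 0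

def CTaux : ℕ → List α → BTree α
  | 0, _ => .nil
  | (n+1), S =>
    if S.isEmpty then .nil else
      let i := leftmostMinIdx S
      .node (CTaux n (S.take i)) (S.getD i default) (CTaux n (S.drop (i+1)))

/-- The (labeled) Cartesian tree of `S`. -/
def CT (S : List α) : BTree α := CTaux S.length S

/-- Front pointers of a sequence `u` of naturals (1-based positions `k ≥ 2` with `k - u[k] = 1`). -/
def frontPointers (u : List ℕ) : Finset ℕ :=
  (Finset.Icc 2 u.length).filter (fun k => k - u.getD (k-1) 0 = 1)

/-- `FP(S)[i]`: number of front pointers of `PD(S[i..])` (1-based `i`). -/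
def FPval (S : List α) (i : ℕ) : ℕ := (frontPointers (PD (S.drop (i-1)))).card

/-- The FP encoding of `S`. -/
def FP (S : List α) : List ℕ := (List.range S.length).map (fun k => FPval S (k+1))

end

section SCER

def shapeSize : Shape → ℕ
  | .nil => 0
  | .node l r => shapeSize l + shapeSize r + 1

variable {α : Type*} [LinearOrder α] [Inhabited α]

lemma CTaux_nil (n : ℕ) : CTaux n ([] : List α) = .nil := by
  cases n <;> simp [CTaux]

lemma lm_spec {S : List α} (h : S ≠ []) :
    leftmostMinIdx S < S.length ∧
      (∀ j < S.length, S.getD (leftmostMinIdx S) default ≤ S.getD j default) ∧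
      (∀ j < leftmostMinIdx S, S.getD (leftmostMinIdx S) default < S.getD j default) := by
  have hne : (List.range S.length).argmin (fun j => S.getD j default) ≠ none := by
    intro hcon
    rw [List.argmin_eq_none, List.range_eq_nil] at hcon
    exact h (List.length_eq_zero_iff.mp hcon)
  obtain ⟨m, hm⟩ := Option.ne_none_iff_exists'.mp hne
  have hlm : leftmostMinIdx S = m := by unfold leftmostMinIdx; rw [hm]; rfl
  rw [List.argmin_eq_some_iff] at hm
  obtain ⟨hmem, hle, hidx⟩ := hm
  have hmlt : m < S.length := List.mem_range.mp hmem
  have hio : ∀ a : ℕ, a < S.length → (List.range S.length).idxOf a = a := by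
    intro a ha
    have := List.Nodup.idxOf_getElem (List.nodup_range (n := S.length)) a (by simpa using ha)
    simpa using this
  refine ⟨hlm ▸ hmlt, ?_, ?_⟩
  · intro j hj
    rw [hlm]
    exact hle j (List.mem_range.mpr hj)
  · intro j hj
    rw [hlm] at hj ⊢
    by_contra hcon
    push_neg at hcon
    have hjlt : j < S.length := lt_trans hj hmlt
    have := hidx j (List.mem_range.mpr hjlt) hcon
    rw [hio m hmlt, hio j hjlt] at this
    omega

lemma lm_unique {S : List α} {m m' : ℕ}
    (h1 : m < S.length) (h2 : ∀ j < S.length, S.getD m default ≤ S.getD j default)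
    (h3 : ∀ j < m, S.getD m default < S.getD j default)
    (h1' : m' < S.length) (h2' : ∀ j < S.length, S.getD m' default ≤ S.getD j default)
    (h3' : ∀ j < m', S.getD m' default < S.getD j default) : m = m' := by
  rcases lt_trichotomy m m' with h | h | h
  · exact absurd (h3' m h) (h2 m' h1').not_gt
  · exact h
  · exact absurd (h3 m' h) (h2' m h1).not_gt

lemma getD_take' {S : List α} {n j : ℕ} (h : j < n) (d : α) :
    (S.take n).getD j d = S.getD j d := by
  by_cases hj : j < S.length
  · rw [List.getD_eq_getElem?_getD, List.getD_eq_getElem?_getD,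
      List.getElem?_eq_getElem (l := S.take n) (by simp only [List.length_take, List.length_drop, List.length_pos_iff]; omega),
      List.getElem?_eq_getElem hj, List.getElem_take]
  · rw [List.getD_eq_getElem?_getD, List.getD_eq_getElem?_getD,
      List.getElem?_eq_none (l := S.take n) (by simp only [List.length_take, List.length_drop, List.length_pos_iff]; omega),
      List.getElem?_eq_none (by omega)]

lemma getD_drop' {S : List α} {i j : ℕ} (h : i + j < S.length) (d : α) :
    (S.drop i).getD j d = S.getD (i + j) d := by
  rw [List.getD_eq_getElem?_getD, List.getD_eq_getElem?_getD,
    List.getElem?_eq_getElem (l := S.drop i) (by simp only [List.length_take, List.length_drop, List.length_pos_iff]; omega),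
    List.getElem?_eq_getElem h, List.getElem_drop]

lemma CTaux_congr : ∀ (k : ℕ) (S : List α), S.length ≤ k →
    ∀ n m, S.length ≤ n → S.length ≤ m → CTaux n S = CTaux m S := by
  intro k
  induction k with
  | zero =>
    intro S hS n m _ _
    have : S = [] := List.length_eq_zero_iff.mp (Nat.le_zero.mp hS)
    subst this; rw [CTaux_nil, CTaux_nil]
  | succ k ih =>
    intro S hS n m hn hm
    rcases eq_or_ne S [] with rfl | hne
    · rw [CTaux_nil, CTaux_nil]
    · have hlen : 0 < S.length := List.length_pos_iff.mpr hne
      obtain ⟨n, rfl⟩ : ∃ n', n = n' + 1 := ⟨n - 1, by omega⟩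
      obtain ⟨m, rfl⟩ : ∃ m', m = m' + 1 := ⟨m - 1, by omega⟩
      have hE : S.isEmpty = false := by simp [hne]
      have hlm := (lm_spec hne).1
      simp only [CTaux, hE, Bool.false_eq_true, if_false]
      congr 1
      · exact ih _ (by simp only [List.length_take, List.length_drop, List.length_pos_iff]; omega) _ _ (by simp only [List.length_take, List.length_drop, List.length_pos_iff]; omega) (by simp only [List.length_take, List.length_drop, List.length_pos_iff]; omega)
      · exact ih _ (by simp only [List.length_take, List.length_drop, List.length_pos_iff]; omega) _ _ (by simp only [List.length_take, List.length_drop, List.length_pos_iff]; omega) (by simp only [List.length_take, List.length_drop, List.length_pos_iff]; omega)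

lemma CT_node {S : List α} (h : S ≠ []) :
    CT S = .node (CT (S.take (leftmostMinIdx S))) (S.getD (leftmostMinIdx S) default)
      (CT (S.drop (leftmostMinIdx S + 1))) := by
  have hlm := (lm_spec h).1
  have hlen : 0 < S.length := List.length_pos_iff.mpr h
  have hE : S.isEmpty = false := by simp [h]
  unfold CT
  obtain ⟨L, hL⟩ : ∃ L, S.length = L + 1 := ⟨S.length - 1, by omega⟩
  rw [hL]
  simp only [CTaux, hE, Bool.false_eq_true, if_false]
  congr 1
  · exact CTaux_congr L _ (by simp only [List.length_take, List.length_drop, List.length_pos_iff]; omega) _ _ (by simp only [List.length_take, List.length_drop, List.length_pos_iff]; omega) (by simp only [List.length_take, List.length_drop, List.length_pos_iff]; omega)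
  · exact CTaux_congr L _ (by simp only [List.length_take, List.length_drop, List.length_pos_iff]; omega) _ _ (by simp only [List.length_take, List.length_drop, List.length_pos_iff]; omega) (by simp only [List.length_take, List.length_drop, List.length_pos_iff]; omega)

lemma size_shape_CT : ∀ (k : ℕ) (S : List α), S.length ≤ k →
    shapeSize (CT S).shape = S.length := by
  intro k
  induction k with
  | zero =>
    intro S hS
    have : S = [] := List.length_eq_zero_iff.mp (Nat.le_zero.mp hS)
    subst this
    simp [CT, CTaux_nil, BTree.shape, shapeSize]
  | succ k ih =>
    intro S hS
    rcases eq_or_ne S [] with rfl | hne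
    · simp [CT, CTaux_nil, BTree.shape, shapeSize]
    · have hlm := (lm_spec hne).1
      rw [CT_node hne]
      simp only [BTree.shape, shapeSize]
      rw [ih _ (by simp only [List.length_take, List.length_drop, List.length_pos_iff]; omega), ih _ (by simp only [List.length_take, List.length_drop, List.length_pos_iff]; omega)]
      simp only [List.length_take, List.length_drop]
      omega

lemma lm_take {S : List α} {n : ℕ} (h : S ≠ []) (hn : leftmostMinIdx S < n) :
    leftmostMinIdx (S.take n) = leftmostMinIdx S := by
  obtain ⟨h1, h2, h3⟩ := lm_spec h
  have hlen : 0 < S.length := List.length_pos_iff.mpr h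
  have hne' : S.take n ≠ [] := List.length_pos_iff.mp (by simp only [List.length_take, List.length_drop, List.length_pos_iff]; omega)
  obtain ⟨h1', h2', h3'⟩ := lm_spec hne'
  refine lm_unique h1' h2' h3' (by simp only [List.length_take, List.length_drop, List.length_pos_iff]; omega) ?_ ?_
  · intro j hj
    rw [List.length_take] at hj
    rw [getD_take' hn, getD_take' (by omega)]
    exact h2 j (by omega)
  · intro j hj
    rw [getD_take' hn, getD_take' (by omega)]
    exact h3 j hj

lemma lm_drop {S : List α} {d : ℕ} (h : S ≠ []) (hd : d ≤ leftmostMinIdx S) :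
    leftmostMinIdx (S.drop d) = leftmostMinIdx S - d := by
  obtain ⟨h1, h2, h3⟩ := lm_spec h
  have hlen : 0 < S.length := List.length_pos_iff.mpr h
  have hne' : S.drop d ≠ [] := List.length_pos_iff.mp (by simp only [List.length_take, List.length_drop, List.length_pos_iff]; omega)
  obtain ⟨h1', h2', h3'⟩ := lm_spec hne'
  refine lm_unique h1' h2' h3' (by simp only [List.length_take, List.length_drop, List.length_pos_iff]; omega) ?_ ?_
  · intro j hj
    rw [List.length_drop] at hj
    rw [getD_drop' (by omega), getD_drop' (by omega),
      show d + (leftmostMinIdx S - d) = leftmostMinIdx S by omega]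
    exact h2 _ (by omega)
  · intro j hj
    rw [getD_drop' (by omega), getD_drop' (by omega),
      show d + (leftmostMinIdx S - d) = leftmostMinIdx S by omega]
    exact h3 _ (by omega)

variable {β : Type*} [LinearOrder β] [Inhabited β]

lemma CT_length_eq {X : List α} {Y : List β} (hct : (CT X).shape = (CT Y).shape) :
    X.length = Y.length := by
  rw [← size_shape_CT X.length X le_rfl, ← size_shape_CT Y.length Y le_rfl, hct]

lemma CT_take_congr : ∀ (k : ℕ) (X : List α) (Y : List β), X.length ≤ k →
    (CT X).shape = (CT Y).shape →
    ∀ n, (CT (X.take n)).shape = (CT (Y.take n)).shape := by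
  intro k
  induction k with
  | zero =>
    intro X Y hk hct n
    have hX : X = [] := List.length_eq_zero_iff.mp (Nat.le_zero.mp hk)
    have hY : Y = [] := List.length_eq_zero_iff.mp (by rw [← CT_length_eq hct, hX]; rfl)
    subst hX; subst hY; simp [CT, CTaux, BTree.shape]
  | succ k ih =>
    intro X Y hk hct n
    have hlen := CT_length_eq hct
    rcases eq_or_ne X [] with rfl | hXne
    · have hY : Y = [] := List.length_eq_zero_iff.mp (by simp at hlen; omega)
      subst hY; simp [CT, CTaux, BTree.shape]
    · have hYne : Y ≠ [] := by
        intro hY; subst hY; exact hXne (List.length_eq_zero_iff.mp (by simpa using hlen))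
      have hlmX := (lm_spec hXne).1
      have hlmY := (lm_spec hYne).1
      rw [CT_node hXne, CT_node hYne] at hct
      simp only [BTree.shape, Shape.node.injEq] at hct
      obtain ⟨hl, hr⟩ := hct
      have hm : leftmostMinIdx X = leftmostMinIdx Y := by
        have hsz : (X.take (leftmostMinIdx X)).length = (Y.take (leftmostMinIdx Y)).length := by
          rw [← size_shape_CT _ _ le_rfl, ← size_shape_CT _ _ le_rfl, hl]
        simp only [List.length_take] at hsz
        omega
      rw [← hm] at hl hr hlmY
      rcases Nat.lt_or_ge (leftmostMinIdx X) n with hcase | hcase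
      · have hXtne : X.take n ≠ [] := List.length_pos_iff.mp (by simp only [List.length_take, List.length_drop, List.length_pos_iff]; omega)
        have hYtne : Y.take n ≠ [] := List.length_pos_iff.mp (by simp only [List.length_take, List.length_drop, List.length_pos_iff]; omega)
        rw [CT_node hXtne, CT_node hYtne, lm_take hXne hcase, lm_take hYne (hm ▸ hcase), ← hm]
        simp only [BTree.shape, Shape.node.injEq]
        refine ⟨?_, ?_⟩
        · rw [List.take_take, List.take_take, Nat.min_eq_left (by omega)]
          exact hl
        · rw [List.drop_take, List.drop_take]
          exact ih _ _ (by simp only [List.length_take, List.length_drop, List.length_pos_iff]; omega) hr _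
      · have eX : (X.take (leftmostMinIdx X)).take n = X.take n := by
          rw [List.take_take, Nat.min_eq_left hcase]
        have eY : (Y.take (leftmostMinIdx X)).take n = Y.take n := by
          rw [List.take_take, Nat.min_eq_left hcase]
        rw [← eX, ← eY]
        exact ih _ _ (by simp only [List.length_take, List.length_drop, List.length_pos_iff]; omega) hl _

lemma CT_drop_congr : ∀ (k : ℕ) (X : List α) (Y : List β), X.length ≤ k →
    (CT X).shape = (CT Y).shape →
    ∀ d, (CT (X.drop d)).shape = (CT (Y.drop d)).shape := by
  intro k
  induction k with
  | zero =>
    intro X Y hk hct d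
    have hX : X = [] := List.length_eq_zero_iff.mp (Nat.le_zero.mp hk)
    have hY : Y = [] := List.length_eq_zero_iff.mp (by rw [← CT_length_eq hct, hX]; rfl)
    subst hX; subst hY; simp [CT, CTaux, BTree.shape]
  | succ k ih =>
    intro X Y hk hct d
    have hlen := CT_length_eq hct
    rcases eq_or_ne X [] with rfl | hXne
    · have hY : Y = [] := List.length_eq_zero_iff.mp (by simp at hlen; omega)
      subst hY; simp [CT, CTaux, BTree.shape]
    · have hYne : Y ≠ [] := by
        intro hY; subst hY; exact hXne (List.length_eq_zero_iff.mp (by simpa using hlen))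
      have hlmX := (lm_spec hXne).1
      have hlmY := (lm_spec hYne).1
      rw [CT_node hXne, CT_node hYne] at hct
      simp only [BTree.shape, Shape.node.injEq] at hct
      obtain ⟨hl, hr⟩ := hct
      have hm : leftmostMinIdx X = leftmostMinIdx Y := by
        have hsz : (X.take (leftmostMinIdx X)).length = (Y.take (leftmostMinIdx Y)).length := by
          rw [← size_shape_CT _ _ le_rfl, ← size_shape_CT _ _ le_rfl, hl]
        simp only [List.length_take] at hsz
        omega
      rw [← hm] at hl hr hlmY
      rcases le_or_gt d (leftmostMinIdx X) with hcase | hcase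
      · have hXdne : X.drop d ≠ [] := List.length_pos_iff.mp (by simp only [List.length_take, List.length_drop, List.length_pos_iff]; omega)
        have hYdne : Y.drop d ≠ [] := List.length_pos_iff.mp (by simp only [List.length_take, List.length_drop, List.length_pos_iff]; omega)
        rw [CT_node hXdne, CT_node hYdne, lm_drop hXne hcase, lm_drop hYne (hm ▸ hcase), ← hm]
        simp only [BTree.shape, Shape.node.injEq]
        refine ⟨?_, ?_⟩
        · rw [← List.drop_take, ← List.drop_take]
          exact ih _ _ (by simp only [List.length_take, List.length_drop, List.length_pos_iff]; omega) hl _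
        · rw [List.drop_drop, List.drop_drop,
            show d + (leftmostMinIdx X - d + 1) = leftmostMinIdx X + 1 by omega]
          exact hr
      · have eX : (X.drop (leftmostMinIdx X + 1)).drop (d - (leftmostMinIdx X + 1)) = X.drop d := by
          rw [List.drop_drop]
          congr 1
          omega
        have eY : (Y.drop (leftmostMinIdx X + 1)).drop (d - (leftmostMinIdx X + 1)) = Y.drop d := by
          rw [List.drop_drop]
          congr 1
          omega
        rw [← eX, ← eY]
        exact ih _ _ (by simp only [List.length_take, List.length_drop, List.length_pos_iff]; omega) hr _

end SCER

/-- Cartesian-tree matching is a substring-consistent equivalence relation. -/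
theorem stmt3 {α β : Type*} [LinearOrder α] [Inhabited α] [LinearOrder β] [Inhabited β]
    (X : List α) (Y : List β) (hlen : X.length = Y.length)
    (hct : (CT X).shape = (CT Y).shape)
    (i j : ℕ) (hi : 1 ≤ i) (hij : i ≤ j) (hj : j ≤ X.length) :
    (CT ((X.drop (i-1)).take (j - i + 1))).shape
      = (CT ((Y.drop (i-1)).take (j - i + 1))).shape := by
  have h1 := CT_drop_congr X.length X Y le_rfl hct (i - 1)
  exact CT_take_congr (X.drop (i-1)).length _ _ le_rfl h1 (j - i + 1)
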